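/- For every integer j ≥ 1 and every real k > 0, ∫_ℝ (1 + tanh t)^j (log(1 + e^{−2t}))^k dt = 2^{j−1} Γ(k+1) ( ζ(k+1) − Σ_{n=1}^{j−1} n^{−k−1} ), where Γ is the Gamma function and ζ is the Riemann zeta function (the sum is empty for j = 1). -/

import Mathlib

open MeasureTheory Real Filter Set

noncomputable section

lemma one_add_tanh (t : ℝ) : 1 + Real.tanh t = 2 / (1 + exp (-2 * t)) := by
  have hc := Real.cosh_pos t
  have h3 : (0:ℝ) < 1 + exp (-2*t) := by positivity
  rw [Real.tanh_eq_sinh_div_cosh]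
  rw [Real.sinh_eq, Real.cosh_eq] at *
  have h5 : exp t * exp (-t) = 1 := by rw [← Real.exp_add]; simp
  have h4 : exp (-(2*t)) = exp (-t) * exp (-t) := by rw [← Real.exp_add]; ring_nf
  field_simp
  have h4' : exp (-(t*2)) = exp (-t) * exp (-t) := by rw [← Real.exp_add]; ring_nf
  linear_combination 2 * exp (-t) * h5 + 2 * exp t * h4'

lemma psi_pos (t : ℝ) : 0 < Real.log (1 + exp (-2 * t)) :=
  Real.log_pos (by linarith [exp_pos (-2*t)])

lemma psi_hasDerivAt (t : ℝ) :
    HasDerivAt (fun t : ℝ => Real.log (1 + exp (-2 * t)))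
      (exp (-2 * t) * (-2) / (1 + exp (-2 * t))) t := by
  have h : (0:ℝ) < 1 + exp (-2*t) := by positivity
  have h1 : HasDerivAt (fun t : ℝ => -2 * t) (-2) t := by
    simpa using (hasDerivAt_id t).const_mul (-2)
  exact (h1.exp.const_add 1).log h.ne'

lemma psi_strictAnti : StrictAnti (fun t : ℝ => Real.log (1 + exp (-2 * t))) := by
  intro a b hab
  have : exp (-2*b) < exp (-2*a) := Real.exp_lt_exp.mpr (by linarith)
  exact Real.log_lt_log (by positivity) (by linarith)

lemma psi_image : (fun t : ℝ => Real.log (1 + exp (-2 * t))) '' univ = Ioi 0 := by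
  ext u
  simp only [image_univ, mem_range, mem_Ioi]
  constructor
  · rintro ⟨t, rfl⟩; exact psi_pos t
  · intro hu
    refine ⟨-(1/2) * Real.log (Real.exp u - 1), ?_⟩
    have h1 : (0:ℝ) < Real.exp u - 1 := by
      have := Real.exp_lt_exp.mpr hu
      simp only [Real.exp_zero] at this
      linarith
    rw [show -2 * (-(1/2) * Real.log (Real.exp u - 1)) = Real.log (Real.exp u - 1) by ring,
      Real.exp_log h1, show (1:ℝ) + (Real.exp u - 1) = Real.exp u by ring, Real.log_exp]

lemma integral_subst (G : ℝ → ℝ) :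
    ∫ u in Ioi (0:ℝ), G u
      = ∫ t : ℝ, (2 * exp (-2 * t) / (1 + exp (-2 * t))) * G (Real.log (1 + exp (-2 * t))) := by
  rw [← psi_image, integral_image_eq_integral_abs_deriv_smul MeasurableSet.univ
      (fun x _ => (psi_hasDerivAt x).hasDerivWithinAt) (psi_strictAnti.injective.injOn) G,
    Measure.restrict_univ]
  refine integral_congr_ae (Filter.Eventually.of_forall fun t => ?_)
  have h : (0:ℝ) < 1 + exp (-2 * t) := by positivity
  have habs : |exp (-2 * t) * (-2) / (1 + exp (-2 * t))| = 2 * exp (-2 * t) / (1 + exp (-2 * t)) := by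
    rw [abs_div, abs_of_pos h, abs_of_nonpos (by nlinarith [exp_pos (-2 * t)])]
    ring
  simp only [smul_eq_mul, habs]



/-- The explicit zeta-function integral:
`∫_ℝ (1 + tanh t)^j (log(1 + e^{-2t}))^k dt
  = 2^{j-1} Γ(k+1) (ζ(k+1) - Σ_{n=1}^{j-1} n^{-k-1})`. -/
theorem zeta_integral (j : ℕ) (hj : 1 ≤ j) (k : ℝ) (hk : 0 < k) :
    (∫ t : ℝ, (1 + Real.tanh t) ^ j * (Real.log (1 + exp (-2 * t))) ^ k) =
      2 ^ (j - 1) * Real.Gamma (k + 1) *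
        ((∑' n : ℕ, ((n : ℝ) + 1) ^ (-(k + 1))) -
          ∑ n ∈ Finset.range (j - 1), ((n : ℝ) + 1) ^ (-(k + 1))) := by
  obtain ⟨i, rfl⟩ := Nat.exists_eq_add_of_le hj
  simp only [Nat.add_sub_cancel_left]
  -- the target function after substitution u = log(1+exp(-2t))
  set G : ℝ → ℝ := fun u => 2 ^ i * u ^ k * exp (-u) ^ (i + 1) / (1 - exp (-u)) with hG
  -- summand functions
  set F : ℕ → ℝ → ℝ := fun m u => 2 ^ i * (u ^ k * exp (-(((m : ℝ) + i + 1) * u))) with hF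
  -- summability facts
  have hfsum : Summable (fun n : ℕ => ((n : ℝ) + 1) ^ (-(k + 1))) := by
    have hf0 : Summable (fun n : ℕ => ((n : ℝ)) ^ (-(k + 1))) :=
      Real.summable_nat_rpow.mpr (by linarith)
    have := (summable_nat_add_iff 1).mpr hf0
    refine this.congr fun n => ?_
    push_cast; ring_nf
  have hfsum' : Summable (fun m : ℕ => ((m : ℝ) + i + 1) ^ (-(k + 1))) := by
    have := (summable_nat_add_iff i).mpr hfsum
    refine this.congr fun n => ?_
    push_cast; ring_nf
  have hb : ∀ m : ℕ, (0:ℝ) < (m:ℝ) + i + 1 := fun m => by positivity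
  have hFint : ∀ m : ℕ, IntegrableOn (F m) (Ioi 0) := by
    intro m
    have h1 := integrableOn_rpow_mul_exp_neg_mul_rpow (by linarith : (-1:ℝ) < k) zero_lt_one (hb m)
    simp_rw [Real.rpow_one] at h1
    have h2 : IntegrableOn (fun x => (2:ℝ) ^ i * (x ^ k * exp (-((m:ℝ) + i + 1) * x))) (Ioi 0) :=
      h1.const_mul _
    refine h2.congr_fun (fun u hu => ?_) measurableSet_Ioi
    simp only [hF, neg_mul]
  have hFval : ∀ m : ℕ, (∫ u in Ioi (0:ℝ), F m u)
      = 2 ^ i * Real.Gamma (k + 1) * ((m:ℝ) + i + 1) ^ (-(k + 1)) := by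
    intro m
    have h := integral_rpow_mul_exp_neg_mul_Ioi (by linarith : (0:ℝ) < k + 1) (hb m)
    simp only [add_sub_cancel_right] at h
    rw [hF]
    simp only
    rw [MeasureTheory.integral_const_mul, h, one_div, Real.inv_rpow (hb m).le,
      ← Real.rpow_neg (hb m).le]
    ring
  have hFnn : ∀ m : ℕ, ∀ u ∈ Ioi (0:ℝ), 0 ≤ F m u := by
    intro m u hu
    have hu' : (0:ℝ) ≤ u := le_of_lt hu
    simp only [hF]
    exact mul_nonneg (by positivity) (mul_nonneg (Real.rpow_nonneg hu' k) (exp_pos _).le)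
  have hFnorm : ∀ m : ℕ, (∫ u in Ioi (0:ℝ), ‖F m u‖) = ∫ u in Ioi (0:ℝ), F m u :=
    fun m => setIntegral_congr_fun measurableSet_Ioi fun u hu => Real.norm_of_nonneg (hFnn m u hu)
  have hsum : HasSum (fun m : ℕ => ∫ u in Ioi (0:ℝ), F m u) (∫ u in Ioi (0:ℝ), ∑' m, F m u) := by
    refine hasSum_integral_of_summable_integral_norm (fun m => hFint m) ?_
    refine Summable.congr ?_ (fun m => (hFnorm m).symm)
    refine Summable.congr ?_ (fun m => (hFval m).symm)
    exact hfsum'.mul_left _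
  have htsum : ∀ u ∈ Ioi (0:ℝ), (∑' m : ℕ, F m u) = G u := by
    intro u hu
    have hu0 : (0:ℝ) < u := hu
    have he1 : exp (-u) < 1 := exp_lt_one_iff.mpr (by linarith)
    have hgeo : ∑' m : ℕ, exp (-u) ^ m = (1 - exp (-u))⁻¹ :=
      tsum_geometric_of_lt_one (exp_nonneg _) he1
    have hterm : ∀ m : ℕ, F m u = 2 ^ i * u ^ k * exp (-u) ^ (i + 1) * exp (-u) ^ m := by
      intro m
      simp only [hF]
      rw [show -(((m:ℝ) + i + 1) * u) = (((m + i + 1 : ℕ)) : ℝ) * (-u) by push_cast; ring,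
        Real.exp_nat_mul]
      ring
    rw [tsum_congr hterm, tsum_mul_left, hgeo, hG]
    simp only
    rw [div_eq_mul_inv]
  have hGint : (∫ u in Ioi (0:ℝ), G u)
      = 2 ^ i * Real.Gamma (k + 1) * ∑' m : ℕ, ((m:ℝ) + i + 1) ^ (-(k + 1)) := by
    rw [show (∫ u in Ioi (0:ℝ), G u) = ∫ u in Ioi (0:ℝ), ∑' m, F m u from
      setIntegral_congr_fun measurableSet_Ioi (fun u hu => (htsum u hu).symm)]
    rw [← hsum.tsum_eq, tsum_congr hFval, tsum_mul_left]
  have htail : (∑' m : ℕ, ((m:ℝ) + i + 1) ^ (-(k + 1)))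
      = (∑' n : ℕ, ((n:ℝ) + 1) ^ (-(k + 1))) - ∑ n ∈ Finset.range i, ((n:ℝ) + 1) ^ (-(k + 1)) := by
    have h := Summable.sum_add_tsum_nat_add i hfsum
    have h2 : (∑' m : ℕ, (((m + i : ℕ) : ℝ) + 1) ^ (-(k + 1)))
        = ∑' m : ℕ, ((m:ℝ) + i + 1) ^ (-(k + 1)) := by
      refine tsum_congr fun m => ?_
      push_cast; ring_nf
    rw [h2] at h
    linarith
  have hpt : ∀ t : ℝ, (2 * exp (-2 * t) / (1 + exp (-2 * t))) * G (Real.log (1 + exp (-2 * t)))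
      = (1 + Real.tanh t) ^ (1 + i) * (Real.log (1 + exp (-2 * t))) ^ k := by
    intro t
    have hE : (0:ℝ) < exp (-2 * t) := exp_pos _
    have h1 : (0:ℝ) < 1 + exp (-2 * t) := by positivity
    rw [one_add_tanh, hG]
    simp only
    rw [Real.exp_neg, Real.exp_log h1]
    have h2 : 1 - (1 + exp (-2 * t))⁻¹ = exp (-2 * t) / (1 + exp (-2 * t)) := by
      field_simp
      ring
    rw [h2, div_pow]
    field_simp
    rw [one_div_pow, add_comm 1 i, mul_assoc _ (1 / _), one_div_mul_cancel (by positivity)]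
    ring
  calc (∫ t : ℝ, (1 + Real.tanh t) ^ (1 + i) * (Real.log (1 + exp (-2 * t))) ^ k)
      = ∫ u in Ioi (0:ℝ), G u := by
        rw [integral_subst G]
        exact integral_congr_ae (Filter.Eventually.of_forall fun t => (hpt t).symm)
    _ = 2 ^ i * Real.Gamma (k + 1) *
        ((∑' n : ℕ, ((n:ℝ) + 1) ^ (-(k + 1))) - ∑ n ∈ Finset.range i, ((n:ℝ) + 1) ^ (-(k + 1))) := by
        rw [hGint, htail]
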